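/- Let K ⊂ ℝⁿ be open, bounded, convex containing the origin, and let K* = {x : φ_K(x) < 1} be its dual body. Then the union over all x ∈ ∂K of the subdifferentials ∂φ*_K(x) equals the boundary of K*: ⋃_{x ∈ ∂K} ∂φ*_K(x) = ∂K*. -/

import Mathlib

open scoped RealInnerProductSpace
open Metric Set

/-- The support function (surface tension) of `K`: `φ_K(x) = sup {x·y : y ∈ K}`. -/
noncomputable def suppFn {n : ℕ} (K : Set (EuclideanSpace ℝ (Fin n)))
    (x : EuclideanSpace ℝ (Fin n)) : ℝ :=
  sSup ((fun y => ⟪x, y⟫) '' K)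

/-- The gauge function `φ*_K(x) = sup {x·y : φ_K(y) < 1}`. -/
noncomputable def gaugeFn {n : ℕ} (K : Set (EuclideanSpace ℝ (Fin n)))
    (x : EuclideanSpace ℝ (Fin n)) : ℝ :=
  sSup ((fun y => ⟪x, y⟫) '' {y | suppFn K y < 1})

/-- The subdifferential of a convex function `φ` at `x₀`. -/
def subdiff {n : ℕ} (φ : EuclideanSpace ℝ (Fin n) → ℝ)
    (x₀ : EuclideanSpace ℝ (Fin n)) : Set (EuclideanSpace ℝ (Fin n)) :=
  {y₀ | ∀ z, φ x₀ + ⟪y₀, z - x₀⟫ ≤ φ z}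

/-- The positive cone `C*_K(x₀)` generated by the subdifferential `∂φ*_K(x₀)`. -/
def coneStar {n : ℕ} (K : Set (EuclideanSpace ℝ (Fin n)))
    (x₀ : EuclideanSpace ℝ (Fin n)) : Set (EuclideanSpace ℝ (Fin n)) :=
  {w | ∃ y ∈ subdiff (gaugeFn K) x₀, ∃ l : ℝ, 0 ≤ l ∧ w = l • y}

section General
variable {n : ℕ} {S : Set (EuclideanSpace ℝ (Fin n))}

lemma suppFn_bddAbove (hb : ∃ R, ∀ w ∈ S, ‖w‖ ≤ R) (y : EuclideanSpace ℝ (Fin n)) :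
    BddAbove ((fun w => ⟪y, w⟫) '' S) := by
  obtain ⟨R, hR⟩ := hb
  refine ⟨‖y‖ * R, ?_⟩
  rintro _ ⟨w, hw, rfl⟩
  calc ⟪y, w⟫ ≤ ‖y‖ * ‖w‖ := real_inner_le_norm y w
    _ ≤ ‖y‖ * R := mul_le_mul_of_nonneg_left (hR w hw) (norm_nonneg y)

lemma inner_le_suppFn (hb : ∃ R, ∀ w ∈ S, ‖w‖ ≤ R)
    {w : EuclideanSpace ℝ (Fin n)} (hw : w ∈ S) (y : EuclideanSpace ℝ (Fin n)) :
    ⟪y, w⟫ ≤ suppFn S y :=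
  le_csSup (suppFn_bddAbove hb y) ⟨w, hw, rfl⟩

lemma suppFn_le (hS : S.Nonempty) {y : EuclideanSpace ℝ (Fin n)} {c : ℝ}
    (h : ∀ w ∈ S, ⟪y, w⟫ ≤ c) : suppFn S y ≤ c :=
  csSup_le (hS.image _) (by rintro _ ⟨w, hw, rfl⟩; exact h w hw)

lemma suppFn_zero (hS : S.Nonempty) : suppFn S 0 = 0 := by
  have : ((fun w => ⟪(0 : EuclideanSpace ℝ (Fin n)), w⟫) '' S) = {0} := by
    have : (fun w : EuclideanSpace ℝ (Fin n) => ⟪(0 : EuclideanSpace ℝ (Fin n)), w⟫)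
        = fun _ => (0 : ℝ) := by ext w; exact inner_zero_left w
    rw [this]
    exact hS.image_const 0
  rw [suppFn, this, csSup_singleton]

lemma suppFn_nonneg (hb : ∃ R, ∀ w ∈ S, ‖w‖ ≤ R)
    (h0 : (0 : EuclideanSpace ℝ (Fin n)) ∈ S) (y : EuclideanSpace ℝ (Fin n)) :
    0 ≤ suppFn S y := by
  have := inner_le_suppFn hb h0 y
  simpa using this

lemma suppFn_smul (hS : S.Nonempty) (hb : ∃ R, ∀ w ∈ S, ‖w‖ ≤ R)
    {t : ℝ} (ht : 0 ≤ t) (y : EuclideanSpace ℝ (Fin n)) :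
    suppFn S (t • y) = t * suppFn S y := by
  rcases eq_or_lt_of_le ht with rfl | ht
  · simp [suppFn_zero hS]
  · apply le_antisymm
    · refine suppFn_le hS fun w hw => ?_
      rw [real_inner_smul_left]
      exact mul_le_mul_of_nonneg_left (inner_le_suppFn hb hw y) ht.le
    · rw [mul_comm, ← le_div_iff₀ ht]
      refine suppFn_le hS fun w hw => ?_
      rw [le_div_iff₀ ht, mul_comm, ← real_inner_smul_left]
      exact inner_le_suppFn hb hw (t • y)

lemma suppFn_continuous (hS : S.Nonempty) (hb : ∃ R, ∀ w ∈ S, ‖w‖ ≤ R) :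
    Continuous (suppFn S) := by
  obtain ⟨R, hR⟩ := hb
  have hR0 : ∀ w ∈ S, ‖w‖ ≤ max R 0 := fun w hw => le_max_of_le_left (hR w hw)
  have key : ∀ a b : EuclideanSpace ℝ (Fin n),
      suppFn S a - suppFn S b ≤ max R 0 * ‖a - b‖ := by
    intro a b
    rw [sub_le_iff_le_add]
    refine suppFn_le hS fun w hw => ?_
    have h1 : ⟪a, w⟫ = ⟪b, w⟫ + ⟪a - b, w⟫ := by rw [inner_sub_left]; ring
    have h2 : ⟪a - b, w⟫ ≤ ‖a - b‖ * ‖w‖ := real_inner_le_norm _ _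
    have h3 : ‖a - b‖ * ‖w‖ ≤ max R 0 * ‖a - b‖ := by
      rw [mul_comm (max R 0)]
      exact mul_le_mul_of_nonneg_left (hR0 w hw) (norm_nonneg _)
    have h4 : ⟪b, w⟫ ≤ suppFn S b := inner_le_suppFn ⟨R, hR⟩ hw b
    linarith
  have : LipschitzWith (Real.toNNReal (max R 0)) (suppFn S) := by
    refine LipschitzWith.of_dist_le_mul fun a b => ?_
    rw [Real.dist_eq, Real.coe_toNNReal _ (le_max_right R 0), dist_eq_norm]
    rw [abs_sub_le_iff]
    constructor
    · exact key a b
    · have := key b a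
      rwa [norm_sub_rev] at this
  exact this.continuous

end General

section MainAux
variable {n : ℕ} {K : Set (EuclideanSpace ℝ (Fin n))}

lemma K_bdd (hKb : Bornology.IsBounded K) : ∃ R, ∀ w ∈ K, ‖w‖ ≤ R := by
  obtain ⟨R, hR⟩ := hKb.subset_closedBall 0
  exact ⟨R, fun w hw => by simpa [mem_closedBall_zero_iff] using hR hw⟩

lemma Ks_bdd (hKo : IsOpen K) (hKb : Bornology.IsBounded K)
    (h0K : (0 : EuclideanSpace ℝ (Fin n)) ∈ K) :
    ∃ R, ∀ y ∈ {y | suppFn K y < 1}, ‖y‖ ≤ R := by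
  obtain ⟨r, hr, hball⟩ := Metric.isOpen_iff.mp hKo 0 h0K
  refine ⟨2 / r, fun y hy => ?_⟩
  rcases eq_or_ne y 0 with rfl | hy0
  · simp; positivity
  · have hyn : 0 < ‖y‖ := norm_pos_iff.mpr hy0
    set w := (r / 2) • (‖y‖⁻¹ • y) with hw
    have hwK : w ∈ K := by
      apply hball
      simp only [mem_ball_zero_iff, hw, norm_smul, norm_smul, Real.norm_eq_abs,
        norm_inv, norm_norm, abs_norm]
      rw [abs_of_pos (by positivity : (0:ℝ) < r / 2)]
      rw [inv_mul_cancel₀ hyn.ne', mul_one]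
      linarith
    have hin : ⟪y, w⟫ = (r / 2) * ‖y‖ := by
      rw [hw, real_inner_smul_right, real_inner_smul_right, real_inner_self_eq_norm_sq]
      field_simp
    have hle : ⟪y, w⟫ ≤ suppFn K y := inner_le_suppFn (K_bdd hKb) hwK y
    have h1 : suppFn K y < 1 := hy
    rw [hin] at hle
    rw [le_div_iff₀ hr]
    nlinarith

end MainAux

section MainAux2
variable {n : ℕ} {K : Set (EuclideanSpace ℝ (Fin n))}

lemma zero_mem_Ks (h0K : (0 : EuclideanSpace ℝ (Fin n)) ∈ K) :
    (0 : EuclideanSpace ℝ (Fin n)) ∈ {y | suppFn K y < 1} := by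
  simp only [mem_setOf_eq, suppFn_zero ⟨0, h0K⟩]
  norm_num

lemma gaugeFn_eq_suppFn : gaugeFn K = suppFn {y | suppFn K y < 1} := rfl

lemma inner_le_suppFn_closure (hKb : Bornology.IsBounded K)
    {w : EuclideanSpace ℝ (Fin n)} (hw : w ∈ closure K) (y : EuclideanSpace ℝ (Fin n)) :
    ⟪y, w⟫ ≤ suppFn K y := by
  have hcl : closure K ⊆ {w | ⟪y, w⟫ ≤ suppFn K y} :=
    closure_minimal (fun w hw => inner_le_suppFn (K_bdd hKb) hw y)
      (isClosed_le (continuous_const.inner continuous_id) continuous_const)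
  exact hcl hw

lemma inner_le_gaugeFn (hKo : IsOpen K) (hKb : Bornology.IsBounded K)
    (h0K : (0 : EuclideanSpace ℝ (Fin n)) ∈ K)
    {y : EuclideanSpace ℝ (Fin n)} (hy : suppFn K y ≤ 1) (z : EuclideanSpace ℝ (Fin n)) :
    ⟪y, z⟫ ≤ gaugeFn K z := by
  have hKsb := Ks_bdd hKo hKb h0K
  have h0Ks := zero_mem_Ks h0K
  have hgz0 : 0 ≤ gaugeFn K z := suppFn_nonneg hKsb h0Ks z
  by_contra h
  push_neg at h
  have key : ∀ t ∈ Ioo (0:ℝ) 1, t * ⟪y, z⟫ ≤ gaugeFn K z := by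
    intro t ht
    have hty : suppFn K (t • y) < 1 := by
      rw [suppFn_smul ⟨0, h0K⟩ (K_bdd hKb) ht.1.le]
      nlinarith [suppFn_nonneg (K_bdd hKb) h0K y, ht.1, ht.2]
    have h2 := inner_le_suppFn hKsb hty z
    rwa [real_inner_smul_right, real_inner_comm] at h2
  set a := ⟪y, z⟫ with ha
  set b := gaugeFn K z with hb
  have hapos : 0 < a := lt_of_le_of_lt hgz0 h
  have ht : (b + a) / (2 * a) ∈ Ioo (0:ℝ) 1 := by
    constructor
    · positivity
    · rw [div_lt_one (by positivity)]
      linarith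
  have h3 := key _ ht
  have h4 : (b + a) / (2 * a) * a = (b + a) / 2 := by
    field_simp
  rw [h4] at h3
  linarith

lemma closure_gaugeFn_le (hKo : IsOpen K) (hKb : Bornology.IsBounded K)
    (h0K : (0 : EuclideanSpace ℝ (Fin n)) ∈ K)
    {x : EuclideanSpace ℝ (Fin n)} (hx : x ∈ closure K) : gaugeFn K x ≤ 1 := by
  rw [gaugeFn_eq_suppFn]
  refine suppFn_le ⟨0, zero_mem_Ks h0K⟩ fun y hy => ?_
  have h1 : ⟪y, x⟫ ≤ suppFn K y := inner_le_suppFn_closure hKb hx y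
  have h2 : suppFn K y < 1 := hy
  rw [real_inner_comm]
  linarith

lemma gaugeFn_le_one_mem_closure (hKo : IsOpen K) (hKb : Bornology.IsBounded K)
    (hKc : Convex ℝ K) (h0K : (0 : EuclideanSpace ℝ (Fin n)) ∈ K)
    {x : EuclideanSpace ℝ (Fin n)} (hx : gaugeFn K x ≤ 1) : x ∈ closure K := by
  by_contra hxc
  obtain ⟨f, u, hfu, hux⟩ :=
    geometric_hahn_banach_closed_point hKc.closure isClosed_closure hxc
  set y := (InnerProductSpace.toDual ℝ (EuclideanSpace ℝ (Fin n))).symm f with hy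
  have hyw : ∀ w, ⟪y, w⟫ = f w := by
    intro w
    rw [← InnerProductSpace.toDual_apply_apply]
    simp [hy]
  have hu0 : 0 < u := by
    have := hfu 0 (subset_closure h0K)
    simpa using this
  set c := (u + f x) / 2 with hc
  have hcu : u < c := by rw [hc]; linarith
  have hcfx : c < f x := by rw [hc]; linarith
  have hc0 : 0 < c := lt_trans hu0 hcu
  have hφy : suppFn K y ≤ u :=
    suppFn_le ⟨0, h0K⟩ fun w hw => by rw [hyw]; exact (hfu w (subset_closure hw)).le
  have hyc : suppFn K (c⁻¹ • y) < 1 := by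
    rw [suppFn_smul ⟨0, h0K⟩ (K_bdd hKb) (by positivity : (0:ℝ) ≤ c⁻¹)]
    rw [inv_mul_lt_iff₀ hc0, mul_one]
    exact lt_of_le_of_lt hφy hcu
  have h1 : ⟪x, c⁻¹ • y⟫ ≤ gaugeFn K x :=
    inner_le_suppFn (Ks_bdd hKo hKb h0K) hyc x
  rw [real_inner_smul_right, real_inner_comm, hyw] at h1
  have : 1 < c⁻¹ * f x := by
    rw [lt_inv_mul_iff₀ hc0, mul_one]
    exact hcfx
  linarith

lemma mem_gaugeFn_lt (hKo : IsOpen K) (hKb : Bornology.IsBounded K)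
    (h0K : (0 : EuclideanSpace ℝ (Fin n)) ∈ K)
    {x : EuclideanSpace ℝ (Fin n)} (hx : x ∈ K) : gaugeFn K x < 1 := by
  have hc : Continuous fun t : ℝ => t • x := continuous_id.smul continuous_const
  have hnh : (fun t : ℝ => t • x) ⁻¹' K ∈ nhds (1:ℝ) :=
    (hKo.preimage hc).mem_nhds (by simp [hx])
  obtain ⟨δ, hδ, hball⟩ := Metric.mem_nhds_iff.mp hnh
  set ε := δ / 2 with hε
  have hεmem : (1 + ε) • x ∈ K := by
    apply hball
    simp only [mem_ball, Real.dist_eq]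
    have : (1 + ε - 1 : ℝ) = ε := by ring
    rw [this, abs_of_pos (by positivity : (0:ℝ) < ε)]
    rw [hε]; linarith
  have hgle : gaugeFn K ((1 + ε) • x) ≤ 1 :=
    closure_gaugeFn_le hKo hKb h0K (subset_closure hεmem)
  have hxeq : x = (1 + ε)⁻¹ • ((1 + ε) • x) := by
    rw [smul_smul, inv_mul_cancel₀ (by positivity : (1:ℝ) + ε ≠ 0), one_smul]
  have : gaugeFn K x = (1 + ε)⁻¹ * gaugeFn K ((1 + ε) • x) := by
    conv_lhs => rw [hxeq]
    rw [gaugeFn_eq_suppFn]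
    exact suppFn_smul ⟨0, zero_mem_Ks h0K⟩ (Ks_bdd hKo hKb h0K)
      (by positivity : (0:ℝ) ≤ (1 + ε)⁻¹) _
  rw [this]
  have hg0 : 0 ≤ gaugeFn K ((1 + ε) • x) :=
    suppFn_nonneg (Ks_bdd hKo hKb h0K) (zero_mem_Ks h0K) _
  have hinv : (1 + ε)⁻¹ < 1 := by
    rw [inv_lt_one_iff₀]
    right; linarith
  nlinarith [hinv, hg0, hgle, inv_pos.mpr (by positivity : (0:ℝ) < 1 + ε)]

end MainAux2

section MainAux3
variable {n : ℕ} {K : Set (EuclideanSpace ℝ (Fin n))}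

lemma gaugeFn_lt_mem (hKo : IsOpen K) (hKb : Bornology.IsBounded K)
    (hKc : Convex ℝ K) (h0K : (0 : EuclideanSpace ℝ (Fin n)) ∈ K)
    {x : EuclideanSpace ℝ (Fin n)} (hx : gaugeFn K x < 1) : x ∈ K := by
  have hg0 : 0 ≤ gaugeFn K x :=
    suppFn_nonneg (Ks_bdd hKo hKb h0K) (zero_mem_Ks h0K) x
  set t := (gaugeFn K x + 1) / 2 with htdef
  have ht0 : 0 < t := by rw [htdef]; linarith
  have ht1 : t < 1 := by rw [htdef]; linarith
  have hgt : gaugeFn K x < t := by rw [htdef]; linarith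
  have hx' : gaugeFn K (t⁻¹ • x) ≤ 1 := by
    rw [gaugeFn_eq_suppFn,
      suppFn_smul ⟨0, zero_mem_Ks h0K⟩ (Ks_bdd hKo hKb h0K)
        (by positivity : (0:ℝ) ≤ t⁻¹) x]
    rw [inv_mul_le_iff₀ ht0, mul_one]
    exact hgt.le
  have hcl : t⁻¹ • x ∈ closure K := gaugeFn_le_one_mem_closure hKo hKb hKc h0K hx'
  have h0int : (0 : EuclideanSpace ℝ (Fin n)) ∈ interior K := by
    rwa [hKo.interior_eq]
  have := hKc.combo_interior_closure_mem_interior h0int hcl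
    (by linarith : (0:ℝ) < 1 - t) ht0.le (by ring)
  rw [smul_zero, zero_add, smul_smul, mul_inv_cancel₀ ht0.ne', one_smul,
    hKo.interior_eq] at this
  exact this

lemma frontier_gaugeFn (hKo : IsOpen K) (hKb : Bornology.IsBounded K)
    (hKc : Convex ℝ K) (h0K : (0 : EuclideanSpace ℝ (Fin n)) ∈ K)
    {x : EuclideanSpace ℝ (Fin n)} (hx : x ∈ frontier K) : gaugeFn K x = 1 := by
  rw [hKo.frontier_eq] at hx
  refine le_antisymm (closure_gaugeFn_le hKo hKb h0K hx.1) ?_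
  by_contra h
  push_neg at h
  exact hx.2 (gaugeFn_lt_mem hKo hKb hKc h0K h)

lemma frontier_dual_eq (hKb : Bornology.IsBounded K)
    (h0K : (0 : EuclideanSpace ℝ (Fin n)) ∈ K) :
    frontier {y | suppFn K y < 1} = {y | suppFn K y = 1} := by
  have hcont := suppFn_continuous ⟨0, h0K⟩ (K_bdd hKb)
  have hopen : IsOpen {y | suppFn K y < 1} := isOpen_lt hcont continuous_const
  ext y
  rw [hopen.frontier_eq]
  constructor
  · rintro ⟨hycl, hynot⟩
    have h1 : suppFn K y ≤ 1 := by
      have : closure {y | suppFn K y < 1} ⊆ {y | suppFn K y ≤ 1} :=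
        closure_minimal (fun z hz => (le_of_lt (hz : suppFn K z < 1) : suppFn K z ≤ 1)) (isClosed_le hcont continuous_const)
      exact this hycl
    have h2 : ¬ suppFn K y < 1 := hynot
    exact le_antisymm h1 (not_lt.mp h2)
  · intro hy
    have hy1 : suppFn K y = 1 := hy
    constructor
    · have htend : Filter.Tendsto (fun t : ℝ => t • y) (nhdsWithin 1 (Iio 1)) (nhds y) := by
        have : Filter.Tendsto (fun t : ℝ => t • y) (nhds 1) (nhds ((1:ℝ) • y)) :=
          ((continuous_id.smul continuous_const).tendsto 1)
        rw [one_smul] at this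
        exact this.mono_left nhdsWithin_le_nhds
      refine mem_closure_of_tendsto htend ?_
      filter_upwards [Ioo_mem_nhdsLT_of_mem (by norm_num : (1:ℝ) ∈ Ioc 0 1)] with t ht
      show suppFn K (t • y) < 1
      rw [suppFn_smul ⟨0, h0K⟩ (K_bdd hKb) ht.1.le, hy1, mul_one]
      exact ht.2
    · simp [hy1]

end MainAux3

/-- The union over `x ∈ ∂K` of the subdifferentials `∂φ*_K(x)` equals the boundary
of the dual body `K* = {y : φ_K(y) < 1}`. -/
theorem iUnion_subdiff_gauge_eq_frontier_dual
    {n : ℕ} (hn : 0 < n) (K : Set (EuclideanSpace ℝ (Fin n)))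
    (hKo : IsOpen K) (hKb : Bornology.IsBounded K) (hKc : Convex ℝ K)
    (h0K : (0 : EuclideanSpace ℝ (Fin n)) ∈ K) :
    (⋃ x ∈ frontier K, subdiff (gaugeFn K) x) = frontier {y | suppFn K y < 1} := by
  have hKsne : ({y | suppFn K y < 1} : Set (EuclideanSpace ℝ (Fin n))).Nonempty :=
    ⟨0, zero_mem_Ks h0K⟩
  have hKsb := Ks_bdd hKo hKb h0K
  have hg0 : gaugeFn K 0 = 0 := suppFn_zero hKsne
  rw [frontier_dual_eq hKb h0K]
  ext y
  simp only [mem_iUnion, exists_prop, mem_setOf_eq]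
  constructor
  · rintro ⟨x, hxf, hsub⟩
    have hgx : gaugeFn K x = 1 := frontier_gaugeFn hKo hKb hKc h0K hxf
    have h1 : (1:ℝ) ≤ ⟪y, x⟫ := by
      have := hsub 0
      rw [hgx, hg0, zero_sub, inner_neg_right] at this
      linarith
    have h2 : ⟪y, x⟫ ≤ 1 := by
      have h2x : gaugeFn K ((2:ℝ) • x) = 2 := by
        rw [gaugeFn_eq_suppFn, suppFn_smul hKsne hKsb (by norm_num : (0:ℝ) ≤ 2) x,
          ← gaugeFn_eq_suppFn, hgx, mul_one]
      have := hsub ((2:ℝ) • x)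
      rw [hgx, h2x] at this
      have hsx : (2:ℝ) • x - x = x := by
        rw [two_smul]; abel
      rw [hsx] at this
      linarith
    have hyx : ⟪y, x⟫ = 1 := le_antisymm h2 h1
    have hyz : ∀ z, ⟪y, z⟫ ≤ gaugeFn K z := by
      intro z
      have := hsub z
      rw [hgx, inner_sub_right, hyx] at this
      linarith
    have hphile : suppFn K y ≤ 1 :=
      suppFn_le ⟨0, h0K⟩ fun w hw =>
        le_of_lt (lt_of_le_of_lt (hyz w) (mem_gaugeFn_lt hKo hKb h0K hw))
    have hphige : (1:ℝ) ≤ suppFn K y := by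
      by_contra h
      push_neg at h
      have hphi0 : 0 ≤ suppFn K y := suppFn_nonneg (K_bdd hKb) h0K y
      set t := (suppFn K y + 1) / 2 with htd
      have ht0 : 0 < t := by rw [htd]; linarith
      have ht1 : t < 1 := by rw [htd]; linarith
      have htx : gaugeFn K (t • x) < 1 := by
        rw [gaugeFn_eq_suppFn, suppFn_smul hKsne hKsb ht0.le x, ← gaugeFn_eq_suppFn,
          hgx, mul_one]
        exact ht1
      have htK : t • x ∈ K := gaugeFn_lt_mem hKo hKb hKc h0K htx
      have := inner_le_suppFn (K_bdd hKb) htK y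
      rw [real_inner_smul_right, hyx, mul_one] at this
      rw [htd] at this
      linarith
    exact le_antisymm hphile hphige
  · intro hy
    have hy0 : y ≠ 0 := by
      intro h
      rw [h, suppFn_zero ⟨0, h0K⟩] at hy
      norm_num at hy
    have hyn : 0 < ‖y‖ := norm_pos_iff.mpr hy0
    have hcomp : IsCompact (closure K) := hKb.isCompact_closure
    obtain ⟨x, hxcl, hmax⟩ := hcomp.exists_isMaxOn ⟨0, subset_closure h0K⟩
      ((continuous_const.inner continuous_id).continuousOn :
        ContinuousOn (fun w => ⟪y, w⟫) (closure K))
    have h1 : ⟪y, x⟫ ≤ 1 := by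
      have := inner_le_suppFn_closure hKb hxcl y
      rwa [hy] at this
    have h2 : (1:ℝ) ≤ ⟪y, x⟫ := by
      have : suppFn K y ≤ ⟪y, x⟫ :=
        suppFn_le ⟨0, h0K⟩ fun w hw => hmax (subset_closure hw)
      rwa [hy] at this
    have hyx : ⟪y, x⟫ = 1 := le_antisymm h1 h2
    have hxK : x ∉ K := by
      intro hxK
      obtain ⟨δ, hδ, hball⟩ := Metric.isOpen_iff.mp hKo x hxK
      set ε := δ / (2 * ‖y‖) with hε
      have hε0 : 0 < ε := by rw [hε]; positivity
      have hwK : x + ε • y ∈ K := by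
        apply hball
        rw [mem_ball_iff_norm, add_sub_cancel_left, norm_smul, Real.norm_eq_abs,
          abs_of_pos hε0, hε]
        rw [div_mul_eq_mul_div, mul_comm]
        rw [div_lt_iff₀ (by positivity : (0:ℝ) < 2 * ‖y‖)]
        nlinarith
      have := inner_le_suppFn (K_bdd hKb) hwK y
      rw [inner_add_right, real_inner_smul_right, real_inner_self_eq_norm_sq, hyx,
        hy] at this
      have hpos : 0 < ε * ‖y‖ ^ 2 := by positivity
      linarith
    have hxf : x ∈ frontier K := by
      rw [hKo.frontier_eq]
      exact ⟨hxcl, hxK⟩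
    refine ⟨x, hxf, fun z => ?_⟩
    have hgx : gaugeFn K x = 1 := frontier_gaugeFn hKo hKb hKc h0K hxf
    have hle := inner_le_gaugeFn hKo hKb h0K (le_of_eq hy) z
    rw [hgx, inner_sub_right, hyx]
    linarith
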